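/- Let X be an m×r matrix and let Σ be the set of n×r matrices that are k-sparse by column (each column has at most k nonzero entries), where k ∈ {1,…,n}. Then every pair (X,Y) with Y ∈ Σ is a PS-unique factorization of XYᵀ in {X} × Σ if, and only if, the Kruskal rank of X equals r (i.e., the columns of X are linearly independent). -/

import Mathlib

open Matrix

def IsGenPerm {r : ℕ} (G : Matrix (Fin r) (Fin r) ℂ) : Prop :=
  ∃ (σ : Equiv.Perm (Fin r)) (d : Fin r → ℂ),
    (∀ i, d i ≠ 0) ∧ ∀ i j, G i j = if i = σ j then d i else 0

def PSEquiv {m n r : ℕ}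
    (p q : Matrix (Fin m) (Fin r) ℂ × Matrix (Fin n) (Fin r) ℂ) : Prop :=
  ∃ G, IsGenPerm G ∧ q.1 = p.1 * G ∧ q.2 = p.2 * (G⁻¹)ᵀ

def PSUniqueSet {m n r : ℕ}
    (Sig : Set (Matrix (Fin m) (Fin r) ℂ × Matrix (Fin n) (Fin r) ℂ)) :
    Set (Matrix (Fin m) (Fin r) ℂ × Matrix (Fin n) (Fin r) ℂ) :=
  {p | p ∈ Sig ∧ ∀ q ∈ Sig, q.1 * q.2ᵀ = p.1 * p.2ᵀ → PSEquiv p q}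

/-- The support of a matrix is contained in the (binary) support `S`. -/
def SuppSub {a b : ℕ} (X : Matrix (Fin a) (Fin b) ℂ) (S : Set (Fin a × Fin b)) : Prop :=
  ∀ i j, X i j ≠ 0 → (i, j) ∈ S

/-- The column support of a matrix: indices of its nonzero columns. -/
def Colsupp {a b : ℕ} (X : Matrix (Fin a) (Fin b) ℂ) : Set (Fin b) :=
  {j | ∃ i, X i j ≠ 0}

/-- The column support of a support (set of index pairs). -/
def ColsuppS {a b : ℕ} (S : Set (Fin a × Fin b)) : Set (Fin b) :=
  {j | ∃ i, (i, j) ∈ S}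

/-- The constraint set Σ_Ω associated with a family of pairs of supports. -/
def SigmaOm {m n r : ℕ} (Om : Set (Set (Fin m × Fin r) × Set (Fin n × Fin r))) :
    Set (Matrix (Fin m) (Fin r) ℂ × Matrix (Fin n) (Fin r) ℂ) :=
  {p | ∃ S ∈ Om, SuppSub p.1 S.1 ∧ SuppSub p.2 S.2}

theorem stmt17 {m n r : ℕ} (X : Matrix (Fin m) (Fin r) ℂ) (k : ℕ)
    (hk1 : 1 ≤ k) (hk2 : k ≤ n) :
    (∀ Y : Matrix (Fin n) (Fin r) ℂ,
        (∀ j : Fin r, {i : Fin n | Y i j ≠ 0}.ncard ≤ k) →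
        (X, Y) ∈ PSUniqueSet
          {p | p.1 = X ∧ ∀ j : Fin r, {i : Fin n | p.2 i j ≠ 0}.ncard ≤ k}) ↔
      LinearIndependent ℂ (fun j : Fin r => fun i => X i j) := by
  have hone : IsGenPerm (1 : Matrix (Fin r) (Fin r) ℂ) := by
    refine ⟨Equiv.refl _, fun _ => 1, fun _ => one_ne_zero, fun i j => ?_⟩
    simp [Matrix.one_apply]
    split_ifs <;> simp_all
  constructor
  · intro h
    rw [Fintype.linearIndependent_iff]
    intro c hc
    by_contra hcne
    push_neg at hcne
    obtain ⟨j0, hj0⟩ := hcne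
    have hn : 0 < n := lt_of_lt_of_le hk1 hk2
    set i0 : Fin n := ⟨0, hn⟩ with hi0
    set Y' : Matrix (Fin n) (Fin r) ℂ := fun i j => if i = i0 then c j else 0 with hY'
    obtain ⟨hmem, huniq⟩ := h 0 (fun j => by simp)
    have hsp : ∀ j : Fin r, {i : Fin n | Y' i j ≠ 0}.ncard ≤ k := by
      intro j
      have hsub : {i : Fin n | Y' i j ≠ 0} ⊆ {i0} := by
        intro i hi
        simp only [Set.mem_setOf_eq, hY'] at hi
        by_contra hne
        simp [Set.mem_singleton_iff] at hne
        simp [hne] at hi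
      calc {i : Fin n | Y' i j ≠ 0}.ncard ≤ ({i0} : Set (Fin n)).ncard :=
            Set.ncard_le_ncard hsub (Set.finite_singleton _)
        _ = 1 := Set.ncard_singleton _
        _ ≤ k := hk1
    have hprod : X * Y'ᵀ = X * (0 : Matrix (Fin n) (Fin r) ℂ)ᵀ := by
      ext a i
      simp only [Matrix.mul_apply, Matrix.transpose_apply, hY', Matrix.zero_apply,
        mul_zero, Finset.sum_const_zero]
      by_cases hi : i = i0
      · simp only [hi, if_true]
        have := congrFun hc a
        simpa [Finset.sum_apply, mul_comm, Matrix.transpose, Matrix.of_apply] using this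
      · simp [hi, Matrix.transpose, Matrix.of_apply]
    obtain ⟨G, hG, h1, h2⟩ := huniq (X, Y') ⟨rfl, hsp⟩ hprod
    have h0 : Y' i0 j0 = 0 := by
      have := congrFun (congrFun h2 i0) j0
      simpa using this
    simp [hY'] at h0
    exact hj0 h0
  · intro hli Y hY
    refine ⟨⟨rfl, hY⟩, ?_⟩
    rintro ⟨X', Y'⟩ ⟨hX', hY'⟩ hprod
    simp only at hX' hY' hprod
    subst hX'
    have hYY : Y' = Y := by
      ext i j
      have key := Fintype.linearIndependent_iff.mp hli (fun j => Y' i j - Y i j) ?_ j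
      · exact sub_eq_zero.mp key
      · ext a
        have := congrFun (congrFun hprod a) i
        simp only [Matrix.mul_apply, Matrix.transpose_apply] at this
        simp only [Finset.sum_apply, Pi.smul_apply, smul_eq_mul, sub_mul, Pi.zero_apply,
          Finset.sum_sub_distrib]
        rw [sub_eq_zero]
        calc ∑ x, Y' i x * X' a x = ∑ x, X' a x * Y' i x :=
              Finset.sum_congr rfl fun x _ => mul_comm _ _
          _ = ∑ x, X' a x * Y i x := this
          _ = ∑ x, Y i x * X' a x := Finset.sum_congr rfl fun x _ => mul_comm _ _
    refine ⟨1, hone, (Matrix.mul_one _).symm, ?_⟩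
    simp [hYY]
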